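/- Let f : ℝ^d → ℝ be L₁-smooth and let μ > 0. Then for every x ∈ ℝ^d, |f^s(x) − f(x)| ≤ μ² L₁ d. -/

import Mathlib

noncomputable section

open MeasureTheory ProbabilityTheory Real Filter Set
open scoped ENNReal NNReal RealInnerProductSpace

/-- `d`-dimensional Euclidean space with the Euclidean norm. -/
abbrev Euc (d : ℕ) := EuclideanSpace ℝ (Fin d)

/-- The standard Gaussian measure `γ_d` on `ℝ^d`: the joint law of `d` independent
standard normal coordinates. -/
def stdGaussian (d : ℕ) : MeasureTheory.Measure (Euc d) :=
  (MeasureTheory.Measure.pi fun _ : Fin d => ProbabilityTheory.gaussianReal 0 1).map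
    (MeasurableEquiv.toLp 2 (Fin d → ℝ))

/-- The Gaussian smoothing `f^s(x) = ∫ f(x + μ u) dγ_d(u)` of `f`. -/
def gaussSmooth {d : ℕ} (f : Euc d → ℝ) (μ : ℝ) (x : Euc d) : ℝ :=
  ∫ u, f (x + μ • u) ∂(stdGaussian d)

/-! ### One-dimensional Gaussian computations -/

lemma gauss_pdf_eq : gaussianPDFReal 0 1 = fun x : ℝ => (√(2*π))⁻¹ * rexp (-(1/2) * x^2) := by
  funext x
  simp only [gaussianPDFReal, NNReal.coe_one, mul_one, sub_zero]
  ring_nf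

lemma integral_gaussReal_eq (g : ℝ → ℝ) :
    ∫ x, g x ∂(gaussianReal 0 1) = ∫ x, gaussianPDFReal 0 1 x * g x := by
  rw [gaussianReal_of_var_ne_zero 0 one_ne_zero]
  have : (gaussianPDF 0 1) = fun x => ((gaussianPDFReal 0 1 x).toNNReal : ℝ≥0∞) := by
    funext x; rfl
  rw [this, integral_withDensity_eq_integral_smul
    (measurable_gaussianPDFReal 0 1).real_toNNReal]
  congr 1
  funext x
  simp [NNReal.smul_def, Real.coe_toNNReal _ (gaussianPDFReal_nonneg 0 1 x)]

lemma integrable_gaussReal_iff {g : ℝ → ℝ} :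
    Integrable g (gaussianReal 0 1) ↔
      Integrable (fun x => gaussianPDFReal 0 1 x * g x) := by
  rw [gaussianReal_of_var_ne_zero 0 one_ne_zero]
  have : (gaussianPDF 0 1) = fun x => ((gaussianPDFReal 0 1 x).toNNReal : ℝ≥0∞) := rfl
  rw [this, integrable_withDensity_iff_integrable_smul
    (measurable_gaussianPDFReal 0 1).real_toNNReal]
  constructor <;> intro h <;> refine h.congr (Eventually.of_forall fun x => ?_) <;>
    simp [NNReal.smul_def, Real.coe_toNNReal _ (gaussianPDFReal_nonneg 0 1 x)]

lemma integrable_exp_half : Integrable (fun x : ℝ => rexp (-(1/2) * x^2)) :=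
  integrable_exp_neg_mul_sq (by norm_num : (0:ℝ) < 1/2)

lemma integrable_mul_exp_half : Integrable (fun x : ℝ => x * rexp (-(1/2) * x^2)) := by
  have h := integrable_rpow_mul_exp_neg_mul_sq (by norm_num : (0:ℝ) < 1/2)
    (s := 1) (by norm_num)
  simpa using h

lemma integrable_sq_exp_half : Integrable (fun x : ℝ => x^2 * rexp (-(1/2) * x^2)) := by
  have h := integrable_rpow_mul_exp_neg_mul_sq (by norm_num : (0:ℝ) < 1/2)
    (s := 2) (by norm_num)
  have : ∀ x : ℝ, x ^ (2:ℝ) = x ^ 2 := fun x => by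
    rw [show (2:ℝ) = ((2:ℕ):ℝ) by norm_num, Real.rpow_natCast]
  simpa [this] using h

lemma integral_exp_half : ∫ x : ℝ, rexp (-(1/2) * x^2) = √(2*π) := by
  rw [integral_gaussian]
  rw [show π / (1/2) = 2*π by ring]

lemma integral_mul_exp_half : ∫ x : ℝ, x * rexp (-(1/2) * x^2) = 0 := by
  have h := integral_neg_eq_self (fun x : ℝ => x * rexp (-(1/2) * x^2)) volume
  simp only [neg_sq, neg_mul] at h
  rw [integral_neg] at h
  have h2 : ∫ x : ℝ, x * rexp (-(1/2) * x^2) = ∫ a : ℝ, a * rexp (-(1/2 * a^2)) := by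
    congr 1; funext a; ring_nf
  rw [h2]
  linarith

lemma tendsto_mul_exp_half_atTop :
    Tendsto (fun x : ℝ => x * rexp (-(1/2) * x^2)) atTop (nhds 0) := by
  have h := (rpow_mul_exp_neg_mul_sq_isLittleO_exp_neg (by norm_num : (0:ℝ) < 1/2) 1)
  have harg : Tendsto (fun x : ℝ => -(1/2) * x) atTop atBot := by
    have := tendsto_id.const_mul_atTop_of_neg (show (-(1/2):ℝ) < 0 by norm_num)
    simpa using this
  have h2 : Tendsto (fun x : ℝ => rexp (-(1/2) * x)) atTop (nhds 0) :=
    tendsto_exp_atBot.comp harg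
  have := h.tendsto_zero_of_tendsto h2
  simpa using this

lemma integral_sq_exp_half : ∫ x : ℝ, x^2 * rexp (-(1/2) * x^2) = √(2*π) := by
  have hderiv : ∀ x : ℝ, HasDerivAt (fun y : ℝ => -y * rexp (-(1/2) * y^2))
      (x^2 * rexp (-(1/2) * x^2) - rexp (-(1/2) * x^2)) x := by
    intro x
    have h1 : HasDerivAt (fun y : ℝ => -(1/2) * y^2) (-x) x := by
      simpa using (((hasDerivAt_pow 2 x)).const_mul (-(1/2):ℝ))
    have h2 : HasDerivAt (fun y : ℝ => rexp (-(1/2) * y^2)) (rexp (-(1/2) * x^2) * (-x)) x :=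
      h1.exp
    have h3 : HasDerivAt (fun y : ℝ => -y) (-1 : ℝ) x := (hasDerivAt_id x).neg
    have := h3.mul h2
    exact this.congr_deriv (by ring)
  have hint : Integrable (fun x : ℝ => x^2 * rexp (-(1/2) * x^2) - rexp (-(1/2) * x^2)) :=
    integrable_sq_exp_half.sub integrable_exp_half
  have htop : Tendsto (fun x : ℝ => -x * rexp (-(1/2) * x^2)) atTop (nhds 0) := by
    have := tendsto_mul_exp_half_atTop.neg
    simpa [neg_mul] using this
  have hbot : Tendsto (fun x : ℝ => -x * rexp (-(1/2) * x^2)) atBot (nhds 0) := by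
    have := tendsto_mul_exp_half_atTop.comp tendsto_neg_atBot_atTop
    simpa [Function.comp_def, neg_mul] using this
  have := integral_of_hasDerivAt_of_tendsto hderiv hint hbot htop
  rw [sub_zero] at this
  have hsub := integral_sub integrable_sq_exp_half integrable_exp_half
  rw [hsub] at this
  rw [integral_exp_half] at this
  linarith

lemma sqrt_two_pi_pos : (0:ℝ) < √(2*π) := Real.sqrt_pos.mpr (by positivity)

lemma integrable_id_gauss : Integrable (fun x : ℝ => x) (gaussianReal 0 1) := by
  rw [integrable_gaussReal_iff, gauss_pdf_eq]
  have := integrable_mul_exp_half.const_mul (√(2*π))⁻¹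
  refine this.congr (Eventually.of_forall fun x => ?_)
  ring

lemma integrable_sq_gauss : Integrable (fun x : ℝ => x^2) (gaussianReal 0 1) := by
  rw [integrable_gaussReal_iff, gauss_pdf_eq]
  have := integrable_sq_exp_half.const_mul (√(2*π))⁻¹
  refine this.congr (Eventually.of_forall fun x => ?_)
  ring

lemma integral_id_gauss : ∫ x, x ∂(gaussianReal 0 1) = 0 := by
  rw [integral_gaussReal_eq, gauss_pdf_eq]
  have : ∀ x : ℝ, (√(2*π))⁻¹ * rexp (-(1/2) * x^2) * x
      = (√(2*π))⁻¹ * (x * rexp (-(1/2) * x^2)) := fun x => by ring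
  simp_rw [this, integral_const_mul, integral_mul_exp_half, mul_zero]

lemma integral_sq_gauss : ∫ x, x^2 ∂(gaussianReal 0 1) = 1 := by
  rw [integral_gaussReal_eq, gauss_pdf_eq]
  have : ∀ x : ℝ, (√(2*π))⁻¹ * rexp (-(1/2) * x^2) * x^2
      = (√(2*π))⁻¹ * (x^2 * rexp (-(1/2) * x^2)) := fun x => by ring
  simp_rw [this, integral_const_mul, integral_sq_exp_half]
  exact inv_mul_cancel₀ (ne_of_gt sqrt_two_pi_pos)

/-! ### Coordinate integrals against product measures -/

lemma pi_eval_integrable {ι : Type*} [Fintype ι] [DecidableEq ι] {ν : Measure ℝ}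
    [IsProbabilityMeasure ν] {g : ℝ → ℝ} (hg : Integrable g ν) (i : ι) :
    Integrable (fun y : ι → ℝ => g (y i)) (Measure.pi fun _ => ν) := by
  letI : MeasureSpace ℝ := ⟨ν⟩
  haveI : SigmaFinite (volume : Measure ℝ) := by
    show SigmaFinite ν; infer_instance
  have hint : ∀ j : ι, Integrable (fun x : ℝ => if j = i then g x else 1) (volume : Measure ℝ) := by
    intro j
    by_cases hj : j = i
    · simp only [hj, if_true]; exact hg
    · simp [hj]
  have h := MeasureTheory.Integrable.fintype_prod (𝕜 := ℝ)
    (f := fun j (x : ℝ) => if j = i then g x else 1) hint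
  have heq : (fun y : ι → ℝ => ∏ j, (if j = i then g (y j) else 1))
      = fun y : ι → ℝ => g (y i) := by
    funext y
    rw [Finset.prod_ite_eq' Finset.univ i (fun j => g (y j))]
    simp
  rw [heq] at h
  exact h

lemma pi_eval_integral {ι : Type*} [Fintype ι] [DecidableEq ι] {ν : Measure ℝ}
    [IsProbabilityMeasure ν] (g : ℝ → ℝ) (i : ι) :
    ∫ y, g (y i) ∂(Measure.pi fun _ => ν) = ∫ x, g x ∂ν := by
  letI : MeasureSpace ℝ := ⟨ν⟩
  haveI : SigmaFinite (volume : Measure ℝ) := by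
    show SigmaFinite ν; infer_instance
  have h := MeasureTheory.integral_fintype_prod_eq_prod (𝕜 := ℝ) (ι := ι) (μ := fun _ => (volume : Measure ℝ))
    (fun j (x : ℝ) => if j = i then g x else 1)
  have heq : (fun y : ι → ℝ => ∏ j, (if j = i then g (y j) else 1))
      = fun y : ι → ℝ => g (y i) := by
    funext y
    rw [Finset.prod_ite_eq' Finset.univ i (fun j => g (y j))]
    simp
  have hrhs : (∏ j : ι, ∫ x : ℝ, (if j = i then g x else 1))
      = ∫ x : ℝ, g x := by
    have : ∀ j : ι, (∫ x : ℝ, (if j = i then g x else 1)) = if j = i then (∫ x : ℝ, g x) else 1 := by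
      intro j
      by_cases hj : j = i
      · simp [hj]
      · simp [hj]
    rw [Finset.prod_congr rfl fun j _ => this j,
      Finset.prod_ite_eq' Finset.univ i (fun _ => ∫ x : ℝ, g x)]
    simp
  calc ∫ y, g (y i) ∂(Measure.pi fun _ => ν)
      = ∫ y : ι → ℝ, ∏ j, (if j = i then g (y j) else 1) := by rw [heq]; rfl
    _ = ∏ j : ι, ∫ x : ℝ, (if j = i then g x else 1) := h
    _ = ∫ x : ℝ, g x := hrhs

/-! ### Integrals against the standard Gaussian on `ℝ^d` -/

instance stdGaussian_prob (d : ℕ) : IsProbabilityMeasure (stdGaussian d) := by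
  unfold _root_.stdGaussian
  exact Measure.isProbabilityMeasure_map
    (MeasurableEquiv.toLp 2 (Fin d → ℝ)).measurable.aemeasurable

lemma stdGaussian_integral_eq {d : ℕ} (h : Euc d → ℝ) :
    ∫ u, h u ∂(stdGaussian d)
      = ∫ y, h ((MeasurableEquiv.toLp 2 (Fin d → ℝ)) y)
          ∂(Measure.pi fun _ : Fin d => gaussianReal 0 1) := by
  unfold _root_.stdGaussian
  exact MeasureTheory.integral_map_equiv (μ := Measure.pi fun _ : Fin d => gaussianReal 0 1)
    (MeasurableEquiv.toLp 2 (Fin d → ℝ)) h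

lemma stdGaussian_integrable_iff {d : ℕ} (h : Euc d → ℝ) :
    Integrable h (stdGaussian d)
      ↔ Integrable (fun y => h ((MeasurableEquiv.toLp 2 (Fin d → ℝ)) y))
          (Measure.pi fun _ : Fin d => gaussianReal 0 1) := by
  unfold _root_.stdGaussian
  exact MeasureTheory.integrable_map_equiv (MeasurableEquiv.toLp 2 (Fin d → ℝ)) h

lemma equiv_symm_apply {d : ℕ} (y : Fin d → ℝ) (i : Fin d) :
    ((MeasurableEquiv.toLp 2 (Fin d → ℝ)) y) i = y i := by
  rw [MeasurableEquiv.coe_toLp]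

lemma norm_sq_symm {d : ℕ} (y : Fin d → ℝ) :
    ‖(MeasurableEquiv.toLp 2 (Fin d → ℝ)) y‖^2 = ∑ i, (y i)^2 := by
  rw [EuclideanSpace.norm_eq]
  rw [Real.sq_sqrt (by positivity)]
  congr 1
  funext i
  rw [equiv_symm_apply]
  simp [sq_abs]

lemma integrable_norm_sq_stdGaussian {d : ℕ} :
    Integrable (fun u : Euc d => ‖u‖^2) (stdGaussian d) := by
  rw [stdGaussian_integrable_iff]
  have : (fun y : Fin d → ℝ => ‖(MeasurableEquiv.toLp 2 (Fin d → ℝ)) y‖^2)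
      = fun y => ∑ i, (y i)^2 := by funext y; exact norm_sq_symm y
  rw [this]
  exact integrable_finset_sum _ fun i _ => pi_eval_integrable integrable_sq_gauss i

lemma integral_norm_sq_stdGaussian {d : ℕ} :
    ∫ u, ‖u‖^2 ∂(stdGaussian d) = d := by
  rw [stdGaussian_integral_eq]
  have : (fun y : Fin d → ℝ => ‖(MeasurableEquiv.toLp 2 (Fin d → ℝ)) y‖^2)
      = fun y => ∑ i, (y i)^2 := by funext y; exact norm_sq_symm y
  rw [this, integral_finset_sum _ fun i _ => pi_eval_integrable integrable_sq_gauss i]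
  simp [pi_eval_integral (fun x : ℝ => x^2), integral_sq_gauss]

lemma inner_symm {d : ℕ} (c : Euc d) (y : Fin d → ℝ) :
    ⟪c, (MeasurableEquiv.toLp 2 (Fin d → ℝ)) y⟫ = ∑ i, c i * y i := by
  simp [PiLp.inner_apply, RCLike.inner_apply, equiv_symm_apply, mul_comm]

lemma integrable_inner_stdGaussian {d : ℕ} (c : Euc d) :
    Integrable (fun u : Euc d => ⟪c, u⟫) (stdGaussian d) := by
  rw [stdGaussian_integrable_iff]
  have : (fun y : Fin d → ℝ => ⟪c, (MeasurableEquiv.toLp 2 (Fin d → ℝ)) y⟫)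
      = fun y => ∑ i, c i * y i := by funext y; exact inner_symm c y
  rw [this]
  refine integrable_finset_sum _ fun i _ => ?_
  exact pi_eval_integrable (integrable_id_gauss.const_mul (c i)) i

lemma integral_inner_stdGaussian {d : ℕ} (c : Euc d) :
    ∫ u, ⟪c, u⟫ ∂(stdGaussian d) = 0 := by
  rw [stdGaussian_integral_eq]
  have : (fun y : Fin d → ℝ => ⟪c, (MeasurableEquiv.toLp 2 (Fin d → ℝ)) y⟫)
      = fun y => ∑ i, c i * y i := by funext y; exact inner_symm c y
  rw [this, integral_finset_sum _ fun i _ =>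
    pi_eval_integrable (integrable_id_gauss.const_mul (c i)) i]
  have : ∀ i : Fin d, ∫ y : Fin d → ℝ, c i * y i ∂(Measure.pi fun _ => gaussianReal 0 1) = 0 := by
    intro i
    rw [pi_eval_integral (fun x : ℝ => c i * x) i, integral_const_mul, integral_id_gauss, mul_zero]
  simp [this]

/-! ### Taylor-type bound for functions with Lipschitz gradient -/

lemma taylor_bound {d : ℕ} {L : ℝ} (hL : 0 ≤ L) {f : Euc d → ℝ} (hdiff : Differentiable ℝ f)
    (hsm : ∀ x y : Euc d, ‖gradient f x - gradient f y‖ ≤ L * ‖x - y‖) (x y : Euc d) :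
    |f y - f x - ⟪gradient f x, y - x⟫| ≤ L * ‖y - x‖^2 := by
  set v := y - x with hv
  set g := gradient f x with hg
  set φ : ℝ → ℝ := fun t => f (x + t • v) - t * ⟪g, v⟫ with hφ
  have hderiv : ∀ t : ℝ, HasDerivAt φ (⟪gradient f (x + t • v), v⟫ - ⟪g, v⟫) t := by
    intro t
    have hline : HasDerivAt (fun t : ℝ => x + t • v) v t := by
      have := ((hasDerivAt_id t).smul_const v).const_add x
      simpa using this
    have hfd : HasFDerivAt f (InnerProductSpace.toDual ℝ (Euc d) (gradient f (x + t • v)))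
        (x + t • v) := (hdiff (x + t • v)).hasGradientAt.hasFDerivAt
    have hcomp := hfd.comp_hasDerivAt t hline
    have hmul : HasDerivAt (fun t : ℝ => t * ⟪g, v⟫) (⟪g, v⟫) t := hasDerivAt_mul_const _
    have := hcomp.sub hmul
    simp [InnerProductSpace.toDual_apply_apply] at this ⊢
    exact this
  have hbound : ∀ t ∈ Icc (0:ℝ) 1, ‖⟪gradient f (x + t • v), v⟫ - ⟪g, v⟫‖ ≤ L * ‖v‖^2 := by
    intro t ht
    rw [← inner_sub_left, Real.norm_eq_abs]
    calc |⟪gradient f (x + t • v) - g, v⟫|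
        ≤ ‖gradient f (x + t • v) - g‖ * ‖v‖ := abs_real_inner_le_norm _ _
      _ ≤ (L * ‖(x + t • v) - x‖) * ‖v‖ := by
          apply mul_le_mul_of_nonneg_right _ (norm_nonneg v)
          exact hsm _ _
      _ = (L * (|t| * ‖v‖)) * ‖v‖ := by rw [add_sub_cancel_left, norm_smul]; rfl
      _ ≤ (L * (1 * ‖v‖)) * ‖v‖ := by
          apply mul_le_mul_of_nonneg_right _ (norm_nonneg v)
          apply mul_le_mul_of_nonneg_left _ hL
          apply mul_le_mul_of_nonneg_right _ (norm_nonneg v)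
          rw [abs_of_nonneg ht.1]; exact ht.2
      _ = L * ‖v‖^2 := by ring
  have key := Convex.norm_image_sub_le_of_norm_hasDerivWithin_le
    (fun t ht => (hderiv t).hasDerivWithinAt) hbound (convex_Icc 0 1)
    (left_mem_Icc.mpr zero_le_one) (right_mem_Icc.mpr zero_le_one)
  have h01 : φ 1 - φ 0 = f y - f x - ⟪g, v⟫ := by
    simp [hφ, hv]; ring
  rw [Real.norm_eq_abs, h01] at key
  simpa using key

/-- If `f : ℝ^d → ℝ` is `L₁`-smooth and `μ > 0`, then for every `x`,
`|f^s(x) − f(x)| ≤ μ² L₁ d`. -/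
theorem stmt_2 (d : ℕ) (L₁ μ : ℝ) (hμ : 0 < μ) (f : Euc d → ℝ)
    (hdiff : Differentiable ℝ f)
    (hsm : ∀ x y : Euc d, ‖gradient f x - gradient f y‖ ≤ L₁ * ‖x - y‖) (x : Euc d) :
    |gaussSmooth f μ x - f x| ≤ μ ^ 2 * L₁ * d := by
  by_cases hd : d = 0
  · subst hd
    have hconst : ∀ u : Euc 0, x + μ • u = x := by
      intro u
      ext i
      exact Fin.elim0 i
    have : gaussSmooth f μ x = f x := by
      unfold gaussSmooth
      rw [show (fun u : Euc 0 => f (x + μ • u)) = fun _ => f x by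
        funext u; rw [hconst u]]
      simp
    rw [this]
    simp
  · -- d > 0, so L₁ ≥ 0
    have hL : 0 ≤ L₁ := by
      set i0 : Fin d := ⟨0, Nat.pos_of_ne_zero hd⟩
      have h := hsm 0 (EuclideanSpace.single i0 (1:ℝ))
      have hnorm : ‖(0 : Euc d) - EuclideanSpace.single i0 (1:ℝ)‖ = 1 := by
        rw [zero_sub, norm_neg, EuclideanSpace.norm_single, norm_one]
      rw [hnorm, mul_one] at h
      exact le_trans (norm_nonneg _) h
    set g := gradient f x with hg
    set φ : Euc d → ℝ := fun u => f (x + μ • u) - f x - ⟪g, μ • u⟫ with hφ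
    have hφbound : ∀ u : Euc d, |φ u| ≤ (L₁ * μ^2) * ‖u‖^2 := by
      intro u
      have h := taylor_bound hL hdiff hsm x (x + μ • u)
      rw [add_sub_cancel_left] at h
      calc |φ u| ≤ L₁ * ‖μ • u‖^2 := h
        _ = (L₁ * μ^2) * ‖u‖^2 := by
            rw [norm_smul, Real.norm_eq_abs, abs_of_pos hμ, mul_pow]; ring
    have hφcont : Continuous φ := by
      apply Continuous.sub
      · apply Continuous.sub
        · exact hdiff.continuous.comp (continuous_const.add (continuous_id.const_smul μ))
        · exact continuous_const
      · exact Continuous.inner continuous_const (continuous_id.const_smul μ)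
    have hφint : Integrable φ (stdGaussian d) := by
      refine Integrable.mono' (integrable_norm_sq_stdGaussian.const_mul (L₁ * μ^2))
        hφcont.aestronglyMeasurable (Eventually.of_forall fun u => ?_)
      rw [Real.norm_eq_abs]
      exact hφbound u
    have hInnerInt : Integrable (fun u : Euc d => ⟪g, μ • u⟫) (stdGaussian d) := by
      have : (fun u : Euc d => ⟪g, μ • u⟫) = fun u => μ * ⟪g, u⟫ := by
        funext u; rw [real_inner_smul_right]
      rw [this]
      exact (integrable_inner_stdGaussian g).const_mul μ
    have hInnerZero : ∫ u, ⟪g, μ • u⟫ ∂(stdGaussian d) = 0 := by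
      have : (fun u : Euc d => ⟪g, μ • u⟫) = fun u => μ * ⟪g, u⟫ := by
        funext u; rw [real_inner_smul_right]
      rw [this, integral_const_mul, integral_inner_stdGaussian, mul_zero]
    have hsplit : gaussSmooth f μ x - f x = ∫ u, φ u ∂(stdGaussian d) := by
      have hdecomp : (fun u : Euc d => f (x + μ • u))
          = fun u => φ u + (⟪g, μ • u⟫ + f x) := by
        funext u; simp [hφ]; ring
      unfold gaussSmooth
      have h1 := integral_add (μ := stdGaussian d) hφint (hInnerInt.add (integrable_const (f x)))
      simp only [Pi.add_apply] at h1
      have h2 := integral_add (μ := stdGaussian d) hInnerInt (integrable_const (f x))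
      rw [hdecomp, h1, h2, hInnerZero, integral_const]
      simp
    rw [hsplit]
    calc |∫ u, φ u ∂(stdGaussian d)| ≤ ∫ u, |φ u| ∂(stdGaussian d) := by
          simpa [Real.norm_eq_abs] using
            MeasureTheory.norm_integral_le_integral_norm (μ := stdGaussian d) φ
      _ ≤ ∫ u, (L₁ * μ^2) * ‖u‖^2 ∂(stdGaussian d) := by
          refine integral_mono hφint.abs (integrable_norm_sq_stdGaussian.const_mul _) ?_
          intro u
          exact hφbound u
      _ = (L₁ * μ^2) * ∫ u, ‖u‖^2 ∂(stdGaussian d) := integral_const_mul _ _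
      _ = μ ^ 2 * L₁ * d := by rw [integral_norm_sq_stdGaussian]; ring

end
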